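/- For every n ≥ 1, the number of functions f : {0,…,n−1} → {0,…,n−1} satisfying f(f(x)) ≠ x for all x (anti-involutive functions) equals ∑_{i=0}^{⌊n/2⌋} (−1)^i (n−1)^{n−2i} C(n,2i) (2i)!/(2^i · i!). -/

import Mathlib

open Finset
set_option linter.unusedSectionVars false
set_option linter.unusedVariables false
set_option maxHeartbeats 1000000


open Finset

/-- Number of perfect matchings (fixed-point-free involutions) on `k` points. -/
def aiM : ℕ → ℕ
  | 0 => 1
  | 1 => 0
  | (k+2) => (k+1) * aiM k

lemma aiM_two_mul (i : ℕ) : aiM (2 * i) * (2 ^ i * i.factorial) = (2 * i).factorial := by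
  induction i with
  | zero => simp [aiM]
  | succ j ih =>
      have h2 : 2 * (j + 1) = (2 * j) + 2 := by ring
      rw [h2]
      show (2 * j + 1) * aiM (2 * j) * (2 ^ (j+1) * (j+1).factorial) = (2 * j + 2).factorial
      have : (2 * j + 2).factorial = (2*j+2) * ((2*j+1) * (2*j).factorial) := by
        rw [Nat.factorial_succ, Nat.factorial_succ]
      rw [this, ← ih, Nat.factorial_succ, pow_succ]
      ring

lemma aiM_odd (i : ℕ) : aiM (2 * i + 1) = 0 := by
  induction i with
  | zero => rfl
  | succ j ih =>
      have h2 : 2 * (j + 1) + 1 = (2 * j + 1) + 2 := by ring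
      rw [h2]
      show (2 * j + 1 + 1) * aiM (2 * j + 1) = 0
      rw [ih, mul_zero]

lemma aiM_div (i : ℕ) : (2 * i).factorial / (2 ^ i * i.factorial) = aiM (2 * i) := by
  rw [← aiM_two_mul i]
  exact Nat.mul_div_cancel _ (by positivity)


section AI
variable {α : Type*} [Fintype α] [DecidableEq α]

def aiSupp (g : α → α) : Finset α := univ.filter (fun x => g x ≠ x)

def aiComp (g : α → α) (s : Finset α) : ℕ :=
  (s.image (fun x => ({x, g x} : Finset α))).card



lemma aiSupp_eq_iff {g : α → α} {S : Finset α} :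
    aiSupp g = S ↔ ∀ x, g x ≠ x ↔ x ∈ S := by
  simp [aiSupp, Finset.ext_iff]

lemma fiber_card {S : Finset α} {a b : α} (ha : a ∈ S) (hb : b ∈ S) (hab : a ≠ b) :
    ((univ.filter (fun g : α → α => (∀ x, g (g x) = x) ∧ aiSupp g = S)).filter
      (fun g => g a = b)).card
    = (univ.filter (fun h : α → α => (∀ x, h (h x) = x) ∧ aiSupp h = S \ {a, b})).card := by
  apply Finset.card_nbij' (fun g x => if x = a ∨ x = b then x else g x)
    (fun h x => if x = a then b else if x = b then a else h x)
  · intro g hg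
    simp only [Finset.mem_coe, mem_filter, mem_univ, true_and] at hg ⊢
    obtain ⟨⟨hinv, hsupp⟩, hgab⟩ := hg
    rw [aiSupp_eq_iff] at hsupp
    have hgb : g b = a := by rw [← hgab, hinv]
    have hout : ∀ x, ¬(x = a ∨ x = b) → g x ≠ a ∧ g x ≠ b := by
      intro x hx
      push_neg at hx
      constructor
      · intro h; apply hx.2; rw [← hgab, ← h, hinv]
      · intro h; apply hx.1; rw [← hgb, ← h, hinv]
    constructor
    · intro x
      by_cases hx : x = a ∨ x = b
      · simp [hx]
      · have h2 := hout x hx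
        simp only [if_neg hx]
        rw [if_neg (by push_neg; exact h2), hinv]
    · rw [aiSupp_eq_iff]
      intro x
      by_cases hx : x = a ∨ x = b
      · simp only [if_pos hx]
        constructor
        · intro h; exact absurd rfl h
        · intro h; exact absurd (Finset.mem_sdiff.mp h).2 (by simp [hx])
      · simp only [if_neg hx]
        rw [hsupp x, Finset.mem_sdiff]
        push_neg at hx
        simp [hx.1, hx.2]
  · intro h hh
    simp only [Finset.mem_coe, mem_filter, mem_univ, true_and] at hh ⊢
    obtain ⟨hinv, hsupp⟩ := hh
    rw [aiSupp_eq_iff] at hsupp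
    have key : ∀ x, x ≠ a → x ≠ b → h x ≠ a ∧ h x ≠ b := by
      intro x hxa hxb
      by_cases hfix : h x = x
      · rw [hfix]; exact ⟨hxa, hxb⟩
      · have hx1 : h x ∈ S \ {a, b} := by
          refine (hsupp (h x)).mp ?_
          rw [hinv x]
          exact fun e => hfix e.symm
        have := (Finset.mem_sdiff.mp hx1).2
        simp only [Finset.mem_insert, Finset.mem_singleton] at this
        push_neg at this
        exact this
    have ha' : h a = a := by
      by_contra hne
      have := (hsupp a).mp hne
      rw [Finset.mem_sdiff] at this
      exact this.2 (by simp)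
    have hb' : h b = b := by
      by_contra hne
      have := (hsupp b).mp hne
      rw [Finset.mem_sdiff] at this
      exact this.2 (by simp)
    refine ⟨⟨?_, ?_⟩, by simp⟩
    · intro x
      by_cases hxa : x = a
      · subst hxa; simp [hab, Ne.symm hab]
      · by_cases hxb : x = b
        · subst hxb; simp [hab, Ne.symm hab]
        · obtain ⟨h1, h2⟩ := key x hxa hxb
          simp only [if_neg hxa, if_neg hxb, if_neg h1, if_neg h2]
          exact hinv x
    · rw [aiSupp_eq_iff]
      intro x
      by_cases hxa : x = a
      · subst hxa; simp [Ne.symm hab, ha]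
      · by_cases hxb : x = b
        · subst hxb; simp [hab, hb, hxa]
        · simp only [if_neg hxa, if_neg hxb]
          rw [hsupp x, Finset.mem_sdiff]
          simp [hxa, hxb]
  · intro g hg
    simp only [Finset.mem_coe, mem_filter, mem_univ, true_and] at hg
    obtain ⟨⟨hinv, hsupp⟩, hgab⟩ := hg
    have hgb : g b = a := by rw [← hgab, hinv]
    funext x
    by_cases hxa : x = a
    · subst hxa; simp [hgab]
    · by_cases hxb : x = b
      · subst hxb; simp [hgb, hab, Ne.symm hab]
      · simp [hxa, hxb]
  · intro h hh
    simp only [Finset.mem_coe, mem_filter, mem_univ, true_and] at hh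
    obtain ⟨hinv, hsupp⟩ := hh
    rw [aiSupp_eq_iff] at hsupp
    have ha' : h a = a := by
      by_contra hne
      have := (hsupp a).mp hne
      rw [Finset.mem_sdiff] at this
      exact this.2 (by simp)
    have hb' : h b = b := by
      by_contra hne
      have := (hsupp b).mp hne
      rw [Finset.mem_sdiff] at this
      exact this.2 (by simp)
    funext x
    by_cases hx : x = a ∨ x = b
    · rcases hx with rfl | rfl
      · simp [ha']
      · simp [hb']
    · push_neg at hx
      simp [hx.1, hx.2]

lemma card_invol : ∀ (k : ℕ), ∀ S : Finset α, S.card = k →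
    (univ.filter (fun g : α → α => (∀ x, g (g x) = x) ∧ aiSupp g = S)).card = aiM k := by
  intro k
  induction k using Nat.strong_induction_on with
  | _ k IH =>
  intro S hS
  match k, hS with
  | 0, hS =>
    rw [Finset.card_eq_zero] at hS
    subst hS
    have : (univ.filter (fun g : α → α => (∀ x, g (g x) = x) ∧ aiSupp g = ∅))
        = {fun x => x} := by
      ext g
      simp only [mem_filter, mem_univ, true_and, mem_singleton, aiSupp_eq_iff]
      constructor
      · rintro ⟨-, h2⟩
        funext x
        by_contra hx
        simpa using (h2 x).mp hx
      · rintro rfl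
        simp
    rw [this]
    rfl
  | (k+1), hS =>
    have hne : S.Nonempty := by
      rw [← Finset.card_pos, hS]; omega
    obtain ⟨a, ha⟩ := hne
    rw [Finset.card_eq_sum_ones]
    rw [← Finset.sum_fiberwise_of_maps_to (g := fun g : α → α => g a)
        (t := S.erase a) ?hmaps (fun _ => (1:ℕ))]
    case hmaps =>
      intro g hg
      simp only [mem_filter, mem_univ, true_and] at hg
      obtain ⟨hinv, hsupp⟩ := hg
      rw [aiSupp_eq_iff] at hsupp
      have hga : g a ≠ a := (hsupp a).mpr ha
      refine Finset.mem_erase.mpr ⟨hga, ?_⟩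
      refine (hsupp (g a)).mp ?_
      rw [hinv a]
      exact fun h => hga h.symm
    · have hfib : ∀ b ∈ S.erase a,
          (∑ _g ∈ (univ.filter (fun g : α → α => (∀ x, g (g x) = x) ∧ aiSupp g = S)).filter
            (fun g => g a = b), (1:ℕ)) = aiM (k - 1) := by
        intro b hb
        obtain ⟨hba, hbS⟩ := Finset.mem_erase.mp hb
        rw [Finset.sum_const, smul_eq_mul, mul_one]
        have hk1 : 1 < S.card :=
          Finset.one_lt_card.mpr ⟨a, ha, b, hbS, Ne.symm hba⟩
        have hcard2 : (S \ {a, b}).card = k - 1 := by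
          rw [Finset.card_sdiff_of_subset (by intro x hx; simp at hx; rcases hx with rfl|rfl <;> assumption)]
          rw [hS, Finset.card_pair (Ne.symm hba)]
          omega
        rw [fiber_card ha hbS (Ne.symm hba)]
        exact IH (k-1) (by omega) _ hcard2
      rw [Finset.sum_congr rfl hfib, Finset.sum_const, smul_eq_mul,
        Finset.card_erase_of_mem ha, hS]
      simp only [Nat.add_sub_cancel]
      match k with
      | 0 => simp [aiM]
      | (j+1) => simp [aiM]


lemma aiComp_congr {f g : α → α} {s : Finset α} (h : ∀ x ∈ s, f x = g x) :
    aiComp f s = aiComp g s := by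
  unfold aiComp
  rw [Finset.image_congr]
  intro x hx
  simp only [Finset.mem_coe] at hx
  show ({x, f x} : Finset α) = {x, g x}
  rw [h x hx]

lemma aiComp_union_pair {f : α → α} {s : Finset α} {a : α} (hfa : f (f a) = a)
    (has : a ∉ s) (hfas : f a ∉ s) (hinv : ∀ x ∈ s, f x ∈ s) :
    aiComp f (s ∪ {a, f a}) = aiComp f s + 1 := by
  unfold aiComp
  have himg : (s ∪ {a, f a}).image (fun x => ({x, f x} : Finset α))
      = insert {a, f a} (s.image (fun x => ({x, f x} : Finset α))) := by
    rw [Finset.image_union]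
    have : ({a, f a} : Finset α).image (fun x => ({x, f x} : Finset α)) = {({a, f a} : Finset α)} := by
      rw [show ({a, f a} : Finset α) = insert a {f a} from rfl, Finset.image_insert,
        Finset.image_singleton, hfa, Finset.pair_comm (f a) a]
      simp
    rw [this, Finset.union_comm]
    rfl
  rw [himg, Finset.card_insert_of_notMem]
  intro hmem
  obtain ⟨x, hx, hpair⟩ := Finset.mem_image.mp hmem
  have : a ∈ ({x, f x} : Finset α) := by rw [hpair]; simp
  simp only [Finset.mem_insert, Finset.mem_singleton] at this
  rcases this with rfl | h
  · exact has hx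
  · exact has (h ▸ hinv x hx)

/-- The sieve identity for a single function. -/
lemma ai_step2 (f : α → α) :
    (∑ s ∈ univ.filter (fun s : Finset α => ∀ x ∈ s, f x ∈ s ∧ f (f x) = x),
      (-1:ℤ) ^ (aiComp f s))
    = if (∀ x, f (f x) ≠ x) then 1 else 0 := by
  by_cases hP : ∀ x, f (f x) ≠ x
  · rw [if_pos hP]
    have : univ.filter (fun s : Finset α => ∀ x ∈ s, f x ∈ s ∧ f (f x) = x) = {∅} := by
      ext s
      simp only [mem_filter, mem_univ, true_and, mem_singleton]
      constructor
      · intro h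
        by_contra hne
        obtain ⟨x, hx⟩ := Finset.nonempty_iff_ne_empty.mpr hne
        exact hP x (h x hx).2
      · rintro rfl; simp
    rw [this, Finset.sum_singleton]
    simp [aiComp]
  · rw [if_neg hP]
    push_neg at hP
    obtain ⟨a, ha⟩ := hP
    apply Finset.sum_involution
      (fun s _ => if a ∈ s then s \ {a, f a} else s ∪ {a, f a})
    -- sum to zero
    · intro s hs
      simp only [mem_filter, mem_univ, true_and] at hs
      by_cases has : a ∈ s
      · simp only [if_pos has]
        have hfas : f a ∈ s := (hs a has).1
        set s' := s \ {a, f a} with hs'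
        have has' : a ∉ s' := by simp [hs']
        have hfas' : f a ∉ s' := by simp [hs']
        have hinv' : ∀ x ∈ s', f x ∈ s' := by
          intro x hx
          rw [hs', Finset.mem_sdiff] at hx
          obtain ⟨hxs, hxp⟩ := hx
          simp only [Finset.mem_insert, Finset.mem_singleton] at hxp
          push_neg at hxp
          rw [hs', Finset.mem_sdiff]
          refine ⟨(hs x hxs).1, ?_⟩
          simp only [Finset.mem_insert, Finset.mem_singleton]
          push_neg
          constructor
          · intro h
            exact hxp.2 (by rw [← (hs x hxs).2, h])
          · intro h
            exact hxp.1 (by rw [← (hs x hxs).2, h, ha])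
        have hrec : s = s' ∪ {a, f a} := by
          rw [hs', Finset.sdiff_union_of_subset]
          intro x hx
          simp only [Finset.mem_insert, Finset.mem_singleton] at hx
          rcases hx with rfl | rfl
          · exact has
          · exact hfas
        rw [hrec] at *
        rw [aiComp_union_pair ha has' hfas' hinv']
        ring
      · simp only [if_neg has]
        have hfas : f a ∉ s := by
          intro h
          exact has (ha ▸ (hs (f a) h).1)
        rw [aiComp_union_pair ha has hfas (fun x hx => (hs x hx).1)]
        ring
    -- nonzero → ne
    · intro s hs _
      by_cases has : a ∈ s
      · simp only [if_pos has]
        intro h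
        have : a ∈ s \ {a, f a} := h.symm ▸ has
        simp at this
      · simp only [if_neg has]
        intro h
        apply has
        rw [← h]
        simp
    -- involutive
    · intro s hs
      simp only [mem_filter, mem_univ, true_and] at hs
      by_cases has : a ∈ s
      · have hfas : f a ∈ s := (hs a has).1
        simp only [if_pos has]
        rw [if_neg (by simp)]
        rw [Finset.sdiff_union_of_subset]
        intro x hx
        simp only [Finset.mem_insert, Finset.mem_singleton] at hx
        rcases hx with rfl | rfl
        · exact has
        · exact hfas
      · have hfas : f a ∉ s := by
          intro h
          exact has (ha ▸ (hs (f a) h).1)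
        simp only [if_neg has]
        rw [if_pos (by simp), Finset.union_sdiff_right, Finset.sdiff_eq_self_iff_disjoint]
        rw [Finset.disjoint_left]
        intro x hx hxp
        simp only [Finset.mem_insert, Finset.mem_singleton] at hxp
        rcases hxp with rfl | rfl
        · exact has hx
        · exact hfas hx
    -- mem
    · intro s hs
      simp only [mem_filter, mem_univ, true_and] at hs ⊢
      by_cases has : a ∈ s
      · simp only [if_pos has]
        intro x hx
        rw [Finset.mem_sdiff] at hx
        obtain ⟨hxs, hxp⟩ := hx
        simp only [Finset.mem_insert, Finset.mem_singleton] at hxp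
        push_neg at hxp
        refine ⟨?_, (hs x hxs).2⟩
        rw [Finset.mem_sdiff]
        refine ⟨(hs x hxs).1, ?_⟩
        simp only [Finset.mem_insert, Finset.mem_singleton]
        push_neg
        constructor
        · intro h; exact hxp.2 (by rw [← (hs x hxs).2, h])
        · intro h; exact hxp.1 (by rw [← (hs x hxs).2, h, ha])
      · simp only [if_neg has]
        intro x hx
        rw [Finset.mem_union] at hx
        rcases hx with hxs | hxp
        · exact ⟨Finset.mem_union_left _ (hs x hxs).1, (hs x hxs).2⟩
        · simp only [Finset.mem_insert, Finset.mem_singleton] at hxp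
          rcases hxp with rfl | rfl
          · exact ⟨Finset.mem_union_right _ (by simp), ha⟩
          · refine ⟨Finset.mem_union_right _ (by rw [ha]; simp), by rw [ha]⟩


set_option linter.unusedSectionVars false

lemma mem_aiSupp {g : α → α} {x : α} : x ∈ aiSupp g ↔ g x ≠ x := by
  simp [aiSupp]

lemma pair_eq_of_mem {g : α → α} (hg : ∀ x, g (g x) = x) {y w : α}
    (hw : w ∈ ({y, g y} : Finset α)) : ({y, g y} : Finset α) = {w, g w} := by
  simp only [Finset.mem_insert, Finset.mem_singleton] at hw
  rcases hw with rfl | rfl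
  · rfl
  · rw [hg y, Finset.pair_comm]

lemma two_mul_aiComp {g : α → α} (hg : ∀ x, g (g x) = x) :
    2 * aiComp g (aiSupp g) = (aiSupp g).card := by
  set u := (aiSupp g).image (fun x => ({x, g x} : Finset α)) with hu
  have hdisj : ∀ t1 ∈ u, ∀ t2 ∈ u, t1 ≠ t2 → Disjoint t1 t2 := by
    intro t1 h1 t2 h2 hne
    obtain ⟨y, _, rfl⟩ := Finset.mem_image.mp h1
    obtain ⟨z, _, rfl⟩ := Finset.mem_image.mp h2
    by_contra hd
    rw [Finset.not_disjoint_iff] at hd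
    obtain ⟨w, hw1, hw2⟩ := hd
    exact hne ((pair_eq_of_mem hg hw1).trans (pair_eq_of_mem hg hw2).symm)
  have hbi : u.biUnion id = aiSupp g := by
    ext x
    simp only [Finset.mem_biUnion, id_eq]
    constructor
    · rintro ⟨t, ht, hx⟩
      obtain ⟨y, hy, rfl⟩ := Finset.mem_image.mp ht
      simp only [Finset.mem_insert, Finset.mem_singleton] at hx
      rcases hx with rfl | rfl
      · exact hy
      · rw [mem_aiSupp] at hy ⊢
        rw [hg y]
        exact fun h => hy h.symm
    · intro hx
      exact ⟨{x, g x}, Finset.mem_image_of_mem _ hx, by simp⟩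
  have hcard2 : ∀ t ∈ u, t.card = 2 := by
    intro t ht
    obtain ⟨y, hy, rfl⟩ := Finset.mem_image.mp ht
    rw [mem_aiSupp] at hy
    exact Finset.card_pair (Ne.symm hy)
  calc 2 * aiComp g (aiSupp g) = ∑ _t ∈ u, 2 := by
        rw [Finset.sum_const, smul_eq_mul, mul_comm]; rfl
    _ = ∑ t ∈ u, (id t).card := by
        exact (Finset.sum_congr rfl (fun t ht => (hcard2 t ht).symm))
    _ = (u.biUnion id).card := (Finset.card_biUnion hdisj).symm
    _ = (aiSupp g).card := by rw [hbi]

lemma aiComp_supp_union {g : α → α} (hg : ∀ x, g (g x) = x) {F : Finset α}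
    (hd : Disjoint F (aiSupp g)) :
    aiComp g (aiSupp g ∪ F) = aiComp g (aiSupp g) + F.card := by
  unfold aiComp
  rw [Finset.image_union]
  have hFr : F.image (fun x => ({x, g x} : Finset α))
      = F.image (fun x => ({x} : Finset α)) := by
    apply Finset.image_congr
    intro x hx
    simp only [Finset.mem_coe] at hx
    have : g x = x := by
      by_contra h
      exact (Finset.disjoint_left.mp hd hx) (mem_aiSupp.mpr h)
    show ({x, g x} : Finset α) = {x}
    rw [this]
    simp
  rw [hFr, Finset.card_union_of_disjoint, Finset.card_image_of_injective _
    Finset.singleton_injective]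
  rw [Finset.disjoint_left]
  intro t ht hts
  obtain ⟨y, hy, rfl⟩ := Finset.mem_image.mp ht
  obtain ⟨x, hx, hxe⟩ := Finset.mem_image.mp hts
  rw [mem_aiSupp] at hy
  have h1 : y ∈ ({x} : Finset α) := by rw [hxe]; simp
  have h2 : g y ∈ ({x} : Finset α) := by rw [hxe]; simp
  simp only [Finset.mem_singleton] at h1 h2
  exact hy (h2.trans h1.symm)

lemma card_std_fiber {s : Finset α} {g : α → α} (hg : ∀ x ∉ s, g x = x) :
    (univ.filter (fun f : α → α => (fun x => if x ∈ s then f x else x) = g)).card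
      = (Fintype.card α) ^ (sᶜ.card) := by
  have heq : univ.filter (fun f : α → α => (fun x => if x ∈ s then f x else x) = g)
      = Fintype.piFinset (fun x => if x ∈ s then ({g x} : Finset α) else univ) := by
    ext f
    simp only [mem_filter, mem_univ, true_and, Fintype.mem_piFinset, funext_iff]
    constructor
    · intro h x
      by_cases hx : x ∈ s
      · specialize h x
        rw [if_pos hx] at h ⊢
        simp [h]
      · rw [if_neg hx]
        simp
    · intro h x
      by_cases hx : x ∈ s
      · specialize h x
        rw [if_pos hx] at h ⊢
        simpa using h
      · rw [if_neg hx, hg x hx]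
  rw [heq, Fintype.card_piFinset]
  have : ∀ x : α, (if x ∈ s then ({g x} : Finset α) else univ).card
      = if x ∈ s then 1 else Fintype.card α := by
    intro x
    by_cases hx : x ∈ s <;> simp [hx]
  rw [Finset.prod_congr rfl (fun x _ => this x)]
  rw [← Finset.prod_filter_mul_prod_filter_not univ (· ∈ s)]
  have h1 : ∏ x ∈ univ.filter (· ∈ s), (if x ∈ s then 1 else Fintype.card α) = 1 := by
    apply Finset.prod_eq_one
    intro x hx
    rw [if_pos (Finset.mem_filter.mp hx).2]
  have h2 : univ.filter (fun x => ¬ x ∈ s) = sᶜ := by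
    ext x; simp
  rw [h1, one_mul]
  rw [Finset.prod_congr h2 (fun x hx => if_neg (Finset.mem_compl.mp hx))]
  rw [Finset.prod_const]

lemma cond_iff {g : α → α} {s : Finset α} :
    ((∀ x ∉ s, g x = x) ∧ ∀ x ∈ s, g x ∈ s ∧ g (g x) = x)
      ↔ ((∀ x, g (g x) = x) ∧ aiSupp g ⊆ s) := by
  constructor
  · rintro ⟨h1, h2⟩
    constructor
    · intro x
      by_cases hx : x ∈ s
      · exact (h2 x hx).2
      · rw [h1 x hx, h1 x hx]
    · intro x hx
      rw [mem_aiSupp] at hx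
      by_contra h
      exact hx (h1 x h)
  · rintro ⟨h1, h2⟩
    constructor
    · intro x hx
      by_contra h
      exact hx (h2 (mem_aiSupp.mpr h))
    · intro x hx
      refine ⟨?_, h1 x⟩
      by_cases hgx : g x = x
      · rw [hgx]; exact hx
      · apply h2
        rw [mem_aiSupp, h1 x]
        exact fun h => hgx h.symm

lemma sum_powerset_pow (t : Finset α) (z : ℤ) :
    ∑ F ∈ t.powerset, (-1:ℤ)^F.card * z^(t.card - F.card) = (z - 1)^t.card := by
  have h := Finset.prod_add (fun _ => (-1:ℤ)) (fun _ => z) t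
  rw [Finset.prod_const] at h
  have h2 : (z - 1)^t.card = (-1 + z)^t.card := by ring_nf
  rw [h2, h]
  apply Finset.sum_congr rfl
  intro F hF
  rw [Finset.prod_const, Finset.prod_const,
    Finset.card_sdiff_of_subset (Finset.mem_powerset.mp hF)]

end AI

/-- For `n ≥ 1`, the number of anti-involutive functions `f : {0,…,n−1} → {0,…,n−1}`
(i.e. `f(f(x)) ≠ x` for all `x`) equals
`∑_{i=0}^{⌊n/2⌋} (−1)^i (n−1)^(n−2i) C(n,2i) (2i)!/(2^i·i!)`. -/
theorem card_anti_involutive (n : ℕ) (hn : 1 ≤ n) :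
    (Nat.card {f : Fin n → Fin n // ∀ x, f (f x) ≠ x} : ℤ) =
      ∑ i ∈ Finset.range (n / 2 + 1),
        (-1 : ℤ) ^ i * ((n - 1 : ℕ) : ℤ) ^ (n - 2 * i) * (n.choose (2 * i) : ℤ) *
          (((2 * i).factorial / (2 ^ i * i.factorial) : ℕ) : ℤ) := by
  have hcard : Nat.card {f : Fin n → Fin n // ∀ x, f (f x) ≠ x}
      = (univ.filter (fun f : Fin n → Fin n => ∀ x, f (f x) ≠ x)).card := by
    rw [Nat.card_eq_fintype_card, Fintype.card_subtype]
  rw [hcard]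
  clear hcard
  calc ((univ.filter (fun f : Fin n → Fin n => ∀ x, f (f x) ≠ x)).card : ℤ)
      = ∑ f : Fin n → Fin n, if (∀ x, f (f x) ≠ x) then (1:ℤ) else 0 :=
        (Finset.sum_boole _ _).symm
    _ = ∑ f : Fin n → Fin n,
          ∑ s ∈ univ.filter (fun s : Finset (Fin n) => ∀ x ∈ s, f x ∈ s ∧ f (f x) = x),
            (-1:ℤ)^(aiComp f s) :=
        Finset.sum_congr rfl (fun f _ => by
          convert (ai_step2 f).symm using 2
          ext s; simp) 
    _ = ∑ f : Fin n → Fin n, ∑ s : Finset (Fin n),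
          if (∀ x ∈ s, f x ∈ s ∧ f (f x) = x) then (-1:ℤ)^(aiComp f s) else 0 :=
        Finset.sum_congr rfl (fun f _ => Finset.sum_filter _ _)
    _ = ∑ s : Finset (Fin n), ∑ f : Fin n → Fin n,
          if (∀ x ∈ s, f x ∈ s ∧ f (f x) = x) then (-1:ℤ)^(aiComp f s) else 0 :=
        Finset.sum_comm
    _ = ∑ s : Finset (Fin n), ∑ g ∈ univ.filter (fun g : Fin n → Fin n => ∀ x ∉ s, g x = x),
          ((n:ℤ)^(n - s.card)) *
            (if (∀ x ∈ s, g x ∈ s ∧ g (g x) = x) then (-1:ℤ)^(aiComp g s) else 0) := by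
        refine Finset.sum_congr rfl (fun s _ => ?_)
        have hmaps : ∀ f : Fin n → Fin n, f ∈ (univ : Finset (Fin n → Fin n)) →
            (fun x => if x ∈ s then f x else x) ∈
              univ.filter (fun g : Fin n → Fin n => ∀ x ∉ s, g x = x) := by
          intro f _
          simp only [mem_filter, mem_univ, true_and]
          intro x hx
          rw [if_neg hx]
        rw [← Finset.sum_fiberwise_of_maps_to hmaps
          (fun f => if (∀ x ∈ s, f x ∈ s ∧ f (f x) = x) then (-1:ℤ)^(aiComp f s) else 0)]
        refine Finset.sum_congr rfl (fun g hg => ?_)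
        simp only [mem_filter, mem_univ, true_and] at hg
        have hfg : ∀ f ∈ univ.filter
            (fun f : Fin n → Fin n => (fun x => if x ∈ s then f x else x) = g),
            (if (∀ x ∈ s, f x ∈ s ∧ f (f x) = x) then (-1:ℤ)^(aiComp f s) else 0)
            = (if (∀ x ∈ s, g x ∈ s ∧ g (g x) = x) then (-1:ℤ)^(aiComp g s) else 0) := by
          intro f hf
          simp only [mem_filter, mem_univ, true_and] at hf
          have hag : ∀ x ∈ s, f x = g x := by
            intro x hx
            have := congrFun hf x
            rw [if_pos hx] at this
            exact this
          have hcond : (∀ x ∈ s, f x ∈ s ∧ f (f x) = x)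
              ↔ (∀ x ∈ s, g x ∈ s ∧ g (g x) = x) := by
            constructor
            · intro h x hx
              obtain ⟨h1, h2⟩ := h x hx
              rw [← hag x hx]
              refine ⟨h1, ?_⟩
              rw [← hag (f x) h1]
              exact h2
            · intro h x hx
              obtain ⟨h1, h2⟩ := h x hx
              rw [hag x hx]
              refine ⟨h1, ?_⟩
              rw [hag (g x) h1]
              exact h2
          have hcomp : aiComp f s = aiComp g s := aiComp_congr hag
          by_cases hc : (∀ x ∈ s, f x ∈ s ∧ f (f x) = x)
          · rw [if_pos hc, if_pos (hcond.mp hc), hcomp]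
          · rw [if_neg hc, if_neg (fun h => hc (hcond.mpr h))]
        rw [Finset.sum_congr rfl hfg, Finset.sum_const]
        rw [card_std_fiber hg, Fintype.card_fin, Finset.card_compl, Fintype.card_fin]
        rw [nsmul_eq_mul]
        push_cast
        ring
    _ = ∑ g : Fin n → Fin n, ∑ s : Finset (Fin n),
          if ((∀ x, g (g x) = x) ∧ aiSupp g ⊆ s)
            then ((n:ℤ)^(n - s.card) * (-1:ℤ)^(aiComp g s)) else 0 := by
        have hpt : ∀ (s : Finset (Fin n)) (g : Fin n → Fin n),
            (if (∀ x ∉ s, g x = x) then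
              ((n:ℤ)^(n - s.card)) *
                (if (∀ x ∈ s, g x ∈ s ∧ g (g x) = x) then (-1:ℤ)^(aiComp g s) else 0)
              else 0)
            = if ((∀ x, g (g x) = x) ∧ aiSupp g ⊆ s)
                then ((n:ℤ)^(n - s.card) * (-1:ℤ)^(aiComp g s)) else 0 := by
          intro s g
          by_cases h1 : (∀ x ∉ s, g x = x)
          · by_cases h2 : (∀ x ∈ s, g x ∈ s ∧ g (g x) = x)
            · rw [if_pos h1, if_pos h2, if_pos (cond_iff.mp ⟨h1, h2⟩)]
            · rw [if_pos h1, if_neg h2, if_neg (fun hc => h2 (cond_iff.mpr hc).2), mul_zero]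
          · rw [if_neg h1, if_neg (fun hc => h1 (cond_iff.mpr hc).1)]
        calc ∑ s : Finset (Fin n), ∑ g ∈ univ.filter (fun g : Fin n → Fin n => ∀ x ∉ s, g x = x),
              ((n:ℤ)^(n - s.card)) *
                (if (∀ x ∈ s, g x ∈ s ∧ g (g x) = x) then (-1:ℤ)^(aiComp g s) else 0)
            = ∑ s : Finset (Fin n), ∑ g : Fin n → Fin n,
                if ((∀ x, g (g x) = x) ∧ aiSupp g ⊆ s)
                  then ((n:ℤ)^(n - s.card) * (-1:ℤ)^(aiComp g s)) else 0 := by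
              refine Finset.sum_congr rfl (fun s _ => ?_)
              rw [Finset.sum_filter]
              exact Finset.sum_congr rfl (fun g _ => hpt s g)
          _ = _ := Finset.sum_comm
    _ = ∑ g ∈ univ.filter (fun g : Fin n → Fin n => ∀ x, g (g x) = x),
          ∑ s ∈ univ.filter (fun s : Finset (Fin n) => aiSupp g ⊆ s),
            (n:ℤ)^(n - s.card) * (-1:ℤ)^(aiComp g s) := by
        rw [Finset.sum_filter]
        refine Finset.sum_congr rfl (fun g _ => ?_)
        by_cases hg : ∀ x, g (g x) = x
        · rw [if_pos hg, Finset.sum_filter]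
          refine Finset.sum_congr rfl (fun s _ => ?_)
          by_cases hsub : aiSupp g ⊆ s
          · rw [if_pos ⟨hg, hsub⟩, if_pos hsub]
          · rw [if_neg (fun hc => hsub hc.2), if_neg hsub]
        · rw [if_neg hg]
          exact Finset.sum_eq_zero (fun s _ => if_neg (fun hc => hg hc.1))
    _ = ∑ g ∈ univ.filter (fun g : Fin n → Fin n => ∀ x, g (g x) = x),
          ((-1:ℤ)^((aiSupp g).card / 2) * ((n:ℤ)-1)^(n - (aiSupp g).card)) := by
        refine Finset.sum_congr rfl (fun g hgm => ?_)
        simp only [mem_filter, mem_univ, true_and] at hgm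
        have hc2 := two_mul_aiComp hgm
        have hcomp0 : aiComp g (aiSupp g) = (aiSupp g).card / 2 := by omega
        have hstep : ∑ s ∈ univ.filter (fun s : Finset (Fin n) => aiSupp g ⊆ s),
            (n:ℤ)^(n - s.card) * (-1:ℤ)^(aiComp g s)
            = ∑ F ∈ ((aiSupp g)ᶜ).powerset,
                (-1:ℤ)^((aiSupp g).card / 2) *
                  ((-1:ℤ)^F.card * (n:ℤ)^(((aiSupp g)ᶜ).card - F.card)) := by
          refine Finset.sum_nbij' (fun s => s \ aiSupp g) (fun F => aiSupp g ∪ F)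
            ?_ ?_ ?_ ?_ ?_
          · intro s hs
            rw [Finset.mem_powerset]
            intro x hx
            rw [Finset.mem_compl]
            exact (Finset.mem_sdiff.mp hx).2
          · intro F hF
            simp only [mem_filter, mem_univ, true_and]
            exact Finset.subset_union_left
          · intro s hs
            simp only [mem_filter, mem_univ, true_and] at hs
            exact Finset.union_sdiff_of_subset hs
          · intro F hF
            rw [Finset.mem_powerset] at hF
            apply Finset.union_sdiff_cancel_left
            rw [Finset.disjoint_left]
            intro x hx hxF
            exact (Finset.mem_compl.mp (hF hxF)) hx
          · intro s hs
            simp only [mem_filter, mem_univ, true_and] at hs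
            have hd : Disjoint (s \ aiSupp g) (aiSupp g) := Finset.sdiff_disjoint
            have hset : aiSupp g ∪ (s \ aiSupp g) = s := Finset.union_sdiff_of_subset hs
            conv_lhs => rw [← hset]
            rw [aiComp_supp_union hgm hd, hcomp0]
            rw [Finset.card_union_of_disjoint hd.symm]
            rw [Finset.card_compl, Fintype.card_fin]
            have he1 : n - ((aiSupp g).card + (s \ aiSupp g).card)
                = (n - (aiSupp g).card) - (s \ aiSupp g).card := by omega
            rw [he1, pow_add]
            ring
        rw [hstep, ← Finset.mul_sum, sum_powerset_pow ((aiSupp g)ᶜ) (n:ℤ),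
          Finset.card_compl, Fintype.card_fin]
    _ = ∑ S : Finset (Fin n),
          (aiM S.card : ℤ) * ((-1:ℤ)^(S.card / 2) * ((n:ℤ)-1)^(n - S.card)) := by
        rw [← Finset.sum_fiberwise_of_maps_to (g := aiSupp)
          (t := (univ : Finset (Finset (Fin n)))) (fun g _ => mem_univ _)
          (fun g => ((-1:ℤ)^((aiSupp g).card / 2) * ((n:ℤ)-1)^(n - (aiSupp g).card)))]
        refine Finset.sum_congr rfl (fun S _ => ?_)
        have hterm : ∀ g ∈ (univ.filter (fun g : Fin n → Fin n => ∀ x, g (g x) = x)).filter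
            (fun g => aiSupp g = S),
            ((-1:ℤ)^((aiSupp g).card / 2) * ((n:ℤ)-1)^(n - (aiSupp g).card))
            = ((-1:ℤ)^(S.card / 2) * ((n:ℤ)-1)^(n - S.card)) := by
          intro g hg
          rw [(Finset.mem_filter.mp hg).2]
        rw [Finset.sum_congr rfl hterm, Finset.sum_const, Finset.filter_filter, nsmul_eq_mul]
        congr 1
        rw [Nat.cast_inj]
        convert card_invol S.card S rfl using 2
        ext g; simp
    _ = ∑ k ∈ Finset.range (n+1),
          (n.choose k : ℤ) * ((aiM k : ℤ) * ((-1:ℤ)^(k / 2) * ((n:ℤ)-1)^(n - k))) := by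
        have hmaps : ∀ S : Finset (Fin n), S ∈ (univ : Finset (Finset (Fin n))) →
            S.card ∈ Finset.range (n+1) := by
          intro S _
          rw [Finset.mem_range]
          have := Finset.card_le_univ S
          rw [Fintype.card_fin] at this
          omega
        rw [← Finset.sum_fiberwise_of_maps_to hmaps
          (fun S => (aiM S.card : ℤ) * ((-1:ℤ)^(S.card / 2) * ((n:ℤ)-1)^(n - S.card)))]
        refine Finset.sum_congr rfl (fun k hk => ?_)
        have hterm : ∀ S ∈ (univ : Finset (Finset (Fin n))).filter (fun S => S.card = k),
            (aiM S.card : ℤ) * ((-1:ℤ)^(S.card / 2) * ((n:ℤ)-1)^(n - S.card))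
            = (aiM k : ℤ) * ((-1:ℤ)^(k / 2) * ((n:ℤ)-1)^(n - k)) := by
          intro S hS
          rw [(Finset.mem_filter.mp hS).2]
        rw [Finset.sum_congr rfl hterm, Finset.sum_const]
        have hpc : (univ : Finset (Finset (Fin n))).filter (fun S => S.card = k)
            = Finset.powersetCard k univ := by
          rw [Finset.powersetCard_eq_filter, Finset.powerset_univ]
        rw [hpc, Finset.card_powersetCard, Finset.card_univ, Fintype.card_fin, nsmul_eq_mul]
    _ = ∑ i ∈ Finset.range (n / 2 + 1),
        (-1 : ℤ) ^ i * ((n - 1 : ℕ) : ℤ) ^ (n - 2 * i) * (n.choose (2 * i) : ℤ) *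
          (((2 * i).factorial / (2 ^ i * i.factorial) : ℕ) : ℤ) := by
        rw [← Finset.sum_filter_add_sum_filter_not (Finset.range (n+1)) (fun k => Even k)]
        have hodd : ∑ k ∈ (Finset.range (n+1)).filter (fun k => ¬ Even k),
            (n.choose k : ℤ) * ((aiM k : ℤ) * ((-1:ℤ)^(k / 2) * ((n:ℤ)-1)^(n - k))) = 0 := by
          refine Finset.sum_eq_zero (fun k hk => ?_)
          have hodd' : Odd k := Nat.not_even_iff_odd.mp (Finset.mem_filter.mp hk).2
          obtain ⟨j, hj⟩ := hodd'
          rw [hj, aiM_odd j]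
          push_cast
          ring
        rw [hodd, add_zero]
        refine Finset.sum_nbij' (fun k => k / 2) (fun i => 2 * i) ?_ ?_ ?_ ?_ ?_
        · intro k hk
          simp only [Finset.mem_filter, Finset.mem_range] at hk
          beta_reduce
          rw [Finset.mem_range]
          omega
        · intro i hi
          rw [Finset.mem_range] at hi
          beta_reduce
          simp only [Finset.mem_filter, Finset.mem_range]
          have := Nat.div_mul_le_self n 2
          exact ⟨by omega, even_two_mul i⟩
        · intro k hk
          simp only [Finset.mem_filter, Finset.mem_range] at hk
          beta_reduce
          obtain ⟨j, hj⟩ := hk.2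
          omega
        · intro i _
          beta_reduce
          omega
        · intro k hk
          simp only [Finset.mem_filter, Finset.mem_range] at hk
          beta_reduce
          obtain ⟨j, hj⟩ := hk.2
          have h2i : k / 2 = j := by omega
          rw [h2i, hj]
          have h2j : j + j = 2 * j := by omega
          rw [h2j, aiM_div, Nat.cast_sub hn]
          push_cast
          ring
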